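/- arXiv:2010.07090 — 3 statements merged into one kernel-verified Lean document; each statement's English description precedes it below -/
import Mathlib

section
/- Bohr's theorem: if f(z) = Σ_{n≥0} a_n z^n is analytic on the unit disk with |f(z)| < 1 for all |z| < 1, then Σ_{n≥0} |a_n| r^n ≤ 1 for all r ≤ 1/3, and 1/3 is the largest radius for which this holds for all such f. -/
open Metric

open MeasureTheory Real Complex in
lemma orth (c : ℤ) :
    ∫ θ : ℝ in Set.Ioc (0:ℝ) (2*π), Complex.exp (c * θ * Complex.I) =
      if c = 0 then (2*π : ℂ) else 0 := by
  rw [← intervalIntegral.integral_of_le (by positivity : (0:ℝ) ≤ 2*π)]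
  rcases eq_or_ne c 0 with h | h
  · simp [h, intervalIntegral.integral_const]
  · have hc : (c : ℂ) * Complex.I ≠ 0 := by
      simp [Complex.I_ne_zero, Complex.ext_iff, h]
    have : ∀ θ : ℝ, Complex.exp ((c : ℂ) * θ * Complex.I)
        = Complex.exp (((c:ℂ) * Complex.I) * θ) := by intro θ; ring_nf
    simp only [this]
    rw [integral_exp_mul_complex hc]
    have h2 : (c:ℂ) * Complex.I * ((2:ℝ)*π : ℝ) = c * (2 * π * Complex.I) := by
      push_cast; ring
    rw [h2, Complex.exp_int_mul_two_pi_mul_I]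
    simp [h]

lemma summable_coeff {f : ℂ → ℂ} {a : ℕ → ℂ}
    (hf : ∀ z ∈ ball (0 : ℂ) 1, HasSum (fun n => a n * z ^ n) (f z))
    {r : ℝ} (h0 : 0 ≤ r) (h1 : r < 1) : Summable (fun n => ‖a n‖ * r ^ n) := by
  set r' : ℝ := (r + 1) / 2 with hr'
  have hr0 : 0 < r' := by positivity
  have hrr : r < r' := by simp [hr']; linarith
  have hr1 : r' < 1 := by simp [hr']; linarith
  have hz : (r' : ℂ) ∈ ball (0:ℂ) 1 := by
    simp [mem_ball_zero_iff, abs_of_pos hr0, hr1]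
  have hs := (hf _ hz).summable
  have hbd : BddAbove (Set.range fun n => ‖a n * (r':ℂ) ^ n‖) :=
    (hs.tendsto_atTop_zero.norm.bddAbove_range)
  obtain ⟨C, hC⟩ := hbd
  have hC' : ∀ n, ‖a n‖ * r' ^ n ≤ C := by
    intro n
    have := hC (Set.mem_range_self (f := fun n => ‖a n * (r':ℂ) ^ n‖) n)
    simpa [norm_mul, norm_pow, abs_of_pos hr0] using this
  have hgeo : Summable (fun n => C * (r / r') ^ n) := by
    apply Summable.mul_left
    apply summable_geometric_of_lt_one (by positivity)
    rw [div_lt_one hr0]; exact hrr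
  apply Summable.of_nonneg_of_le (fun n => by positivity) _ hgeo
  intro n
  have key : ‖a n‖ * r ^ n = (‖a n‖ * r' ^ n) * (r / r') ^ n := by
    rw [mul_assoc, ← mul_pow, mul_div_assoc', mul_comm r' r, mul_div_assoc, div_self hr0.ne', mul_one]
  rw [key]
  apply mul_le_mul_of_nonneg_right (hC' n) (by positivity)

lemma cont_circle {f : ℂ → ℂ} {a : ℕ → ℂ}
    (hf : ∀ z ∈ ball (0 : ℂ) 1, HasSum (fun n => a n * z ^ n) (f z))
    {r : ℝ} (h0 : 0 ≤ r) (h1 : r < 1) :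
    Continuous (fun θ : ℝ => f ((r : ℂ) * Complex.exp (θ * Complex.I))) := by
  have hsum := summable_coeff hf h0 h1
  have hcont : ContinuousOn (fun z : ℂ => ∑' n, a n * z ^ n) (closedBall (0:ℂ) r) := by
    apply continuousOn_tsum (fun n => (continuous_const.mul (continuous_pow n)).continuousOn) hsum
    intro n z hz
    rw [mem_closedBall_zero_iff] at hz
    show ‖a n * z ^ n‖ ≤ _
    rw [norm_mul, norm_pow]
    exact mul_le_mul_of_nonneg_left (pow_le_pow_left₀ (norm_nonneg _) hz n) (norm_nonneg _)
  have hmem : ∀ θ : ℝ, (r : ℂ) * Complex.exp (θ * Complex.I) ∈ closedBall (0:ℂ) r := by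
    intro θ
    simp [mem_closedBall_zero_iff, norm_mul, Complex.norm_exp_ofReal_mul_I, _root_.abs_of_nonneg h0, le_refl]
  have hcm : Continuous (fun θ : ℝ => (r:ℂ) * Complex.exp (θ * Complex.I)) := by
    continuity
  have key := hcont.comp_continuous hcm hmem
  have heq : (fun θ : ℝ => f ((r : ℂ) * Complex.exp (θ * Complex.I)))
      = (fun z : ℂ => ∑' n, a n * z ^ n) ∘ (fun θ : ℝ => (r:ℂ) * Complex.exp (θ * Complex.I)) := by
    funext θ
    exact ((hf _ (mem_ball_zero_iff.mpr (lt_of_le_of_lt (mem_closedBall_zero_iff.mp (hmem θ)) h1))).tsum_eq).symm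
  rw [heq]; exact key

open MeasureTheory Real Complex in
lemma coeff_int {f : ℂ → ℂ} {a : ℕ → ℂ}
    (hf : ∀ z ∈ ball (0 : ℂ) 1, HasSum (fun n => a n * z ^ n) (f z))
    {r : ℝ} (h0 : 0 ≤ r) (h1 : r < 1) (k : ℤ) :
    ∫ θ : ℝ in Set.Ioc (0:ℝ) (2*π),
        f ((r:ℂ) * Complex.exp (θ * Complex.I)) * Complex.exp (k * θ * Complex.I)
      = ∑' m : ℕ, a m * (r:ℝ) ^ m * (if (m : ℤ) + k = 0 then (2*π : ℂ) else 0) := by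
  have hmem : ∀ θ : ℝ, (r : ℂ) * Complex.exp (θ * Complex.I) ∈ ball (0:ℂ) 1 := by
    intro θ
    simp only [mem_ball_zero_iff, norm_mul, Complex.norm_exp_ofReal_mul_I, mul_one,
      Complex.norm_real, Real.norm_eq_abs, _root_.abs_of_nonneg h0]
    exact h1
  set g : ℕ → ℝ → ℂ := fun m θ => a m * ((r:ℂ) * Complex.exp (θ * Complex.I)) ^ m
      * Complex.exp (k * θ * Complex.I) with hg
  have hnorm : ∀ m θ, ‖g m θ‖ = ‖a m‖ * r ^ m := by
    intro m θ
    have h1' : ‖Complex.exp ((k:ℂ) * θ * Complex.I)‖ = 1 := by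
      rw [Complex.norm_exp]
      simp [Complex.mul_re, Complex.mul_im]
    simp [hg, norm_mul, norm_pow, h1', Complex.norm_exp_ofReal_mul_I,
      _root_.abs_of_nonneg h0]
  have hptwise : ∀ θ : ℝ, f ((r:ℂ) * Complex.exp (θ * Complex.I))
      * Complex.exp (k * θ * Complex.I) = ∑' m, g m θ := by
    intro θ
    rw [← (hf _ (hmem θ)).tsum_eq, ← tsum_mul_right]
  have hmeas : ∀ m : ℕ, AEStronglyMeasurable (g m)
      (volume.restrict (Set.Ioc (0:ℝ) (2*π))) := by
    intro m
    apply Continuous.aestronglyMeasurable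
    continuity
  have hsum := summable_coeff hf h0 h1
  have hlint : (∑' m : ℕ, ∫⁻ θ : ℝ in Set.Ioc (0:ℝ) (2*π), ‖g m θ‖₊ ∂volume) ≠ ⊤ := by
    have hb : ∀ m : ℕ, (∫⁻ θ : ℝ in Set.Ioc (0:ℝ) (2*π), ‖g m θ‖₊ ∂volume)
        = ENNReal.ofReal ((‖a m‖ * r ^ m) * (2*π)) := by
      intro m
      have : ∀ θ : ℝ, (‖g m θ‖₊ : ENNReal) = ENNReal.ofReal (‖a m‖ * r ^ m) := by
        intro θ
        rw [← hnorm m θ]; exact (ofReal_norm _).symm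
      simp only [this]
      rw [MeasureTheory.setLIntegral_const]
      rw [Real.volume_Ioc]
      rw [← ENNReal.ofReal_mul (by positivity)]
      ring_nf
    simp only [hb]
    rw [← ENNReal.ofReal_tsum_of_nonneg (fun m => by positivity)
      (by exact (hsum.mul_right _))]
    exact ENNReal.ofReal_ne_top
  calc ∫ θ : ℝ in Set.Ioc (0:ℝ) (2*π),
        f ((r:ℂ) * Complex.exp (θ * Complex.I)) * Complex.exp (k * θ * Complex.I)
      = ∫ θ : ℝ in Set.Ioc (0:ℝ) (2*π), ∑' m, g m θ := by
        apply integral_congr_ae; filter_upwards with θ; exact hptwise θ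
    _ = ∑' m, ∫ θ : ℝ in Set.Ioc (0:ℝ) (2*π), g m θ := integral_tsum hmeas hlint
    _ = ∑' m : ℕ, a m * (r:ℝ) ^ m * (if (m : ℤ) + k = 0 then (2*π : ℂ) else 0) := by
        congr 1
        funext m
        have hrw : ∀ θ : ℝ, g m θ
            = (a m * (r:ℝ)^m) * Complex.exp (((((m:ℤ)+k : ℤ)) : ℂ) * θ * Complex.I) := by
          intro θ
          show a m * ((r:ℂ) * Complex.exp (θ * Complex.I)) ^ m * Complex.exp (k * θ * Complex.I) = _
          rw [mul_pow, ← Complex.exp_nat_mul,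
            show a m * ((r:ℂ)^m * Complex.exp ((m:ℂ)*(θ*Complex.I))) * Complex.exp (k*θ*Complex.I)
              = a m * (r:ℂ)^m * (Complex.exp ((m:ℂ)*(θ*Complex.I)) * Complex.exp ((k:ℂ)*(θ*Complex.I)))
              from by ring_nf,
            ← Complex.exp_add]
          push_cast
          ring_nf
        simp only [hrw]
        rw [MeasureTheory.integral_const_mul, orth ((m:ℤ)+k)]

open MeasureTheory Real Complex in
lemma econj (n : ℕ) (θ : ℝ) :
    Complex.exp (((-(n:ℤ) : ℤ) : ℂ) * θ * Complex.I)
      = (starRingEnd ℂ) (Complex.exp (((n:ℤ) : ℂ) * θ * Complex.I)) := by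
  rw [← Complex.exp_conj]
  congr 1
  rw [map_mul, map_mul, Complex.conj_I, Complex.conj_ofReal, map_intCast]
  push_cast
  ring

open MeasureTheory Real Complex in
lemma key {f : ℂ → ℂ} {a : ℕ → ℂ}
    (hf : ∀ z ∈ ball (0 : ℂ) 1, HasSum (fun n => a n * z ^ n) (f z))
    (hb : ∀ z ∈ ball (0 : ℂ) 1, ‖f z‖ < 1)
    {r : ℝ} (h0 : 0 ≤ r) (h1 : r < 1) {n : ℕ} (hn : 0 < n) :
    ‖a n‖ * r ^ n ≤ 2 - 2 * (a 0).re := by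
  set S := Set.Ioc (0:ℝ) (2*π) with hS
  set g : ℝ → ℂ := fun θ => f ((r:ℂ) * Complex.exp (θ * Complex.I)) with hgdef
  set e : ℝ → ℂ := fun θ => Complex.exp (((-(n:ℤ) : ℤ) : ℂ) * θ * Complex.I) with hedef
  have hmem : ∀ θ : ℝ, (r : ℂ) * Complex.exp (θ * Complex.I) ∈ ball (0:ℂ) 1 := by
    intro θ
    simp only [mem_ball_zero_iff, norm_mul,
      Complex.norm_exp_ofReal_mul_I, mul_one, Complex.norm_real, Real.norm_eq_abs, _root_.abs_of_nonneg h0]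
    exact h1
  have hgc : Continuous g := cont_circle hf h0 h1
  have hec : Continuous e := by
    apply Complex.continuous_exp.comp
    fun_prop
  have hene : ∀ θ : ℝ, ‖e θ‖ = 1 := by
    intro θ
    rw [hedef]
    simp only []
    rw [show (((-(n:ℤ) : ℤ) : ℂ) * θ * Complex.I) = ((((-(n:ℤ) : ℤ) : ℝ) * θ : ℝ) : ℂ) * Complex.I
      from by push_cast; ring]
    exact Complex.norm_exp_ofReal_mul_I _
  have I1 : ∫ θ in S, g θ * e θ = 2*π * (a n * (r:ℝ)^n) := by
    rw [hS, coeff_int hf h0 h1 (-(n:ℤ))]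
    rw [tsum_eq_single n]
    · simp; ring
    · intro m hm
      have : ¬ ((m:ℤ) + -(n:ℤ) = 0) := by omega
      simp [this]
  have I0 : ∫ θ in S, g θ = 2*π * a 0 := by
    have h := coeff_int hf h0 h1 0
    simp only [Int.cast_zero, zero_mul, Complex.exp_zero, mul_one, add_zero] at h
    rw [hS, h, tsum_eq_single 0]
    · simp; ring
    · intro m hm
      have : ¬ ((m:ℤ) = 0) := by omega
      simp [this, hm]
  have I2 : ∫ θ in S, (starRingEnd ℂ) (g θ) * e θ = 0 := by
    have hz : ∫ θ in S, g θ * Complex.exp (((n:ℤ) : ℂ) * θ * Complex.I) = 0 := by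
      rw [hS, coeff_int hf h0 h1 (n:ℤ)]
      have hzero : ∀ m : ℕ, a m * (r:ℝ)^m * (if (m:ℤ) + (n:ℤ) = 0 then (2*π:ℂ) else 0) = 0 := by
        intro m
        have : ¬ ((m:ℤ) + (n:ℤ) = 0) := by omega
        simp [this]
      rw [tsum_congr hzero, tsum_zero]
    have hcongr : ∀ θ : ℝ, (starRingEnd ℂ) (g θ) * e θ
        = (starRingEnd ℂ) (g θ * Complex.exp (((n:ℤ) : ℂ) * θ * Complex.I)) := by
      intro θ
      rw [map_mul]
      exact congrArg (fun w => (starRingEnd ℂ) (g θ) * w) (econj n θ)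
    simp only [hcongr]
    rw [integral_conj, hz, map_zero]
  have I3 : ∫ θ in S, (2:ℂ) * e θ = 0 := by
    rw [MeasureTheory.integral_const_mul, hS, hedef]
    rw [orth (-(n:ℤ))]
    have : ¬ (-(n:ℤ) = 0) := by omega
    simp [this]
  have hgi : IntegrableOn (fun θ => g θ * e θ) S := (hgc.mul hec).integrableOn_Ioc
  have hci : IntegrableOn (fun θ => (starRingEnd ℂ) (g θ) * e θ) S :=
    ((Complex.continuous_conj.comp hgc).mul hec).integrableOn_Ioc
  have h2i : IntegrableOn (fun θ => (2:ℂ) * e θ) S := (continuous_const.mul hec).integrableOn_Ioc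
  have Isum : ∫ θ in S, (g θ + (starRingEnd ℂ) (g θ) - 2) * e θ = 2*π * (a n * (r:ℝ)^n) := by
    have hpt : ∀ θ, (g θ + (starRingEnd ℂ) (g θ) - 2) * e θ
        = g θ * e θ + (starRingEnd ℂ) (g θ) * e θ - (2:ℂ) * e θ := by intro θ; ring
    have e1 : ∫ θ in S, (g θ * e θ + (starRingEnd ℂ) (g θ) * e θ - 2 * e θ)
        = (∫ θ in S, (g θ * e θ + (starRingEnd ℂ) (g θ) * e θ)) - ∫ θ in S, (2:ℂ) * e θ :=
      integral_sub (hgi.add hci) h2i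
    have e2 : ∫ θ in S, (g θ * e θ + (starRingEnd ℂ) (g θ) * e θ)
        = (∫ θ in S, g θ * e θ) + ∫ θ in S, (starRingEnd ℂ) (g θ) * e θ := integral_add hgi hci
    simp only [hpt]
    rw [e1, e2, I1, I2, I3]
    ring
  have hbound : ‖(2*π : ℂ) * (a n * (r:ℝ)^n)‖ ≤ ∫ θ in S, ‖(g θ + (starRingEnd ℂ) (g θ) - 2) * e θ‖ := by
    rw [← Isum]; exact norm_integral_le_integral_norm _
  have hgball : ∀ θ : ℝ, ‖g θ‖ < 1 := fun θ => hb _ (hmem θ)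
  have hptnorm : ∀ θ : ℝ, ‖(g θ + (starRingEnd ℂ) (g θ) - 2) * e θ‖ = 2 - 2*(g θ).re := by
    intro θ
    rw [norm_mul, hene θ, mul_one]
    rw [Complex.add_conj]
    have : ((2*(g θ).re : ℝ) : ℂ) - 2 = (((2*(g θ).re - 2 : ℝ)) : ℂ) := by push_cast; ring
    rw [this, Complex.norm_real, Real.norm_eq_abs, abs_of_nonpos (by
      have := (Complex.re_le_norm (g θ)).trans_lt (hgball θ)
      linarith)]
    ring
  have hre : ∫ θ in S, (g θ).re = 2*π * (a 0).re := by
    have h' := integral_re (μ := volume.restrict S) (f := g) hgc.integrableOn_Ioc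
    simp only [RCLike.re_to_complex] at h'
    rw [h', I0]
    simp [Complex.mul_re]
  have hSvol : (volume S).toReal = 2*π := by
    have h2 : (2*π - 0 : ℝ) = 2*π := by ring
    rw [hS, Real.volume_Ioc, h2, ENNReal.toReal_ofReal (by positivity)]
  have hvol : volume S < ⊤ := by rw [hS, Real.volume_Ioc]; exact ENNReal.ofReal_lt_top
  have hgrei : IntegrableOn (fun θ => (g θ).re) S volume :=
    (Complex.continuous_re.comp hgc).integrableOn_Ioc
  have hintnorm : ∫ θ in S, ‖(g θ + (starRingEnd ℂ) (g θ) - 2) * e θ‖ = 2*(2*π) - 2*(2*π*(a 0).re) := by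
    have hsub : ∫ θ in S, ((2:ℝ) - 2 * (g θ).re)
        = (∫ θ in S, (2:ℝ)) - ∫ θ in S, 2 * (g θ).re :=
      integral_sub (integrableOn_const hvol.ne) (hgrei.const_mul 2)
    have hcm : ∫ θ in S, 2 * (g θ).re = 2 * ∫ θ in S, (g θ).re :=
      integral_const_mul 2 _
    simp only [hptnorm]
    rw [hsub, hcm, hre, integral_const, measureReal_restrict_apply_univ, Measure.real, hSvol,
      smul_eq_mul]
    ring
  have hlhs : ‖(2*π : ℂ) * (a n * (r:ℝ)^n)‖ = 2*π * (‖a n‖ * r^n) := by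
    rw [norm_mul, norm_mul]
    simp [norm_mul, norm_pow, Complex.norm_real, _root_.abs_of_nonneg h0,
      _root_.abs_of_nonneg pi_pos.le]
    try ring
  rw [hlhs, hintnorm] at hbound
  have hpi : (0:ℝ) < 2*π := by positivity
  nlinarith [hbound]

lemma wiener {f : ℂ → ℂ} {a : ℕ → ℂ}
    (hf : ∀ z ∈ ball (0 : ℂ) 1, HasSum (fun n => a n * z ^ n) (f z))
    (hb : ∀ z ∈ ball (0 : ℂ) 1, ‖f z‖ < 1) {n : ℕ} (hn : 0 < n) :
    ‖a n‖ ≤ 2 - 2 * ‖a 0‖ := by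
  set u : ℂ := if a 0 = 0 then 1 else (‖a 0‖ : ℂ) / a 0 with hu
  have hu1 : ‖u‖ = 1 := by
    rcases eq_or_ne (a 0) 0 with h | h
    · simp [hu, h]
    · rw [hu, if_neg h]
      rw [norm_div]
      rw [Complex.norm_real, Real.norm_eq_abs, abs_norm, div_self (norm_ne_zero_iff.mpr h)]
  have hua : u * a 0 = (‖a 0‖ : ℂ) := by
    rcases eq_or_ne (a 0) 0 with h | h
    · simp [hu, h]
    · rw [hu, if_neg h, div_mul_cancel₀ _ h]
  have hf' : ∀ z ∈ ball (0 : ℂ) 1, HasSum (fun m => (u * a m) * z ^ m) (u * f z) := by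
    intro z hz
    have := (hf z hz).mul_left u
    simpa [mul_assoc] using this
  have hb' : ∀ z ∈ ball (0 : ℂ) 1, ‖u * f z‖ < 1 := by
    intro z hz
    rw [norm_mul, hu1, one_mul]
    exact hb z hz
  have hkey : ∀ r : ℝ, 0 ≤ r → r < 1 → ‖a n‖ * r ^ n ≤ 2 - 2 * ‖a 0‖ := by
    intro r h0 h1
    have := key hf' hb' h0 h1 hn
    rw [hua] at this
    simpa [norm_mul, hu1] using this
  have htend : Filter.Tendsto (fun r : ℝ => ‖a n‖ * r ^ n) (nhdsWithin 1 (Set.Iio 1))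
      (nhds (‖a n‖)) := by
    have : Filter.Tendsto (fun r : ℝ => ‖a n‖ * r ^ n) (nhds 1) (nhds (‖a n‖ * 1 ^ n)) :=
      ((continuous_const.mul (continuous_pow n)).tendsto 1)
    simpa using this.mono_left nhdsWithin_le_nhds
  apply le_of_tendsto htend
  filter_upwards [Ico_mem_nhdsLT_of_mem (by norm_num : (1:ℝ) ∈ Set.Ioc (0:ℝ) 1)] with r hr
  exact hkey r hr.1 hr.2

set_option maxHeartbeats 1000000 in
lemma part1 (f : ℂ → ℂ) (a : ℕ → ℂ)
    (hf : ∀ z ∈ ball (0 : ℂ) 1, HasSum (fun n => a n * z ^ n) (f z))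
    (hb : ∀ z ∈ ball (0 : ℂ) 1, ‖f z‖ < 1)
    (r : ℝ) (hr0 : 0 ≤ r) (hr13 : r ≤ 1/3) : (∑' n, ‖a n‖ * r ^ n) ≤ 1 := by
  have hr1 : r < 1 := lt_of_le_of_lt hr13 (by norm_num)
  have hsum := summable_coeff hf hr0 hr1
  have ha0 : ‖a 0‖ < 1 := by
    have h := hf 0 (by simp)
    have h2 : HasSum (fun n => a n * (0:ℂ) ^ n) (a 0) := by
      have := hasSum_single (f := fun n => a n * (0:ℂ) ^ n) 0 (fun b hb => by
        simp [pow_eq_zero_iff hb])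
      simpa using this
    have : f 0 = a 0 := h.unique h2
    rw [← this]
    exact hb 0 (by simp)
  set A := ‖a 0‖ with hA
  have hA0 : 0 ≤ A := norm_nonneg _
  have htail_le : ∀ m : ℕ, ‖a (m+1)‖ * r ^ (m+1) ≤ ((2 - 2*A) * r) * r ^ m := by
    intro m
    have hw := wiener hf hb (Nat.succ_pos m)
    calc ‖a (m+1)‖ * r ^ (m+1) ≤ (2 - 2*A) * r ^ (m+1) :=
          mul_le_mul_of_nonneg_right hw (pow_nonneg hr0 _)
      _ = ((2 - 2*A) * r) * r ^ m := by ring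
  have hgeo : Summable (fun m : ℕ => ((2 - 2*A) * r) * r ^ m) :=
    (summable_geometric_of_lt_one hr0 hr1).mul_left _
  have htails : Summable (fun m : ℕ => ‖a (m+1)‖ * r ^ (m+1)) :=
    (summable_nat_add_iff 1).mpr hsum
  have hsplit : (∑' n, ‖a n‖ * r ^ n) = A + ∑' m, ‖a (m+1)‖ * r ^ (m+1) := by
    rw [hsum.tsum_eq_zero_add]
    simp [hA]
  have htb : (∑' m, ‖a (m+1)‖ * r ^ (m+1)) ≤ ∑' m, ((2 - 2*A) * r) * r ^ m :=
    Summable.tsum_le_tsum htail_le htails hgeo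
  have hgeosum : (∑' m : ℕ, ((2 - 2*A) * r) * r ^ m) = ((2 - 2*A) * r) * (1 - r)⁻¹ := by
    rw [tsum_mul_left, tsum_geometric_of_lt_one hr0 hr1]
  rw [hsplit]
  rw [hgeosum] at htb
  have h1r : 0 < 1 - r := by linarith
  have hfin : ((2 - 2*A) * r) * (1 - r)⁻¹ ≤ 1 - A := by
    rw [mul_inv_le_iff₀ h1r]
    nlinarith
  linarith

open MeasureTheory Real Complex in
lemma part2 (ρ : ℝ) (hρ : 1/3 < ρ) :
    ∃ (f : ℂ → ℂ) (a : ℕ → ℂ) (r : ℝ),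
      (∀ z ∈ ball (0 : ℂ) 1, HasSum (fun n => a n * z ^ n) (f z)) ∧
      (∀ z ∈ ball (0 : ℂ) 1, ‖f z‖ < 1) ∧
      0 ≤ r ∧ r ≤ ρ ∧ 1 < (∑' n, ‖a n‖ * r ^ n) := by
  set r : ℝ := min ρ (1/2) with hrdef
  have hr3 : 1/3 < r := lt_min hρ (by norm_num)
  have hrρ : r ≤ ρ := min_le_left _ _
  have hr2 : r ≤ 1/2 := min_le_right _ _
  have hr0 : 0 < r := by linarith
  set t : ℝ := (1-r)/(2*r) with htdef
  have ht1 : t < 1 := by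
    rw [htdef, div_lt_one (by linarith)]
    linarith
  have ht0 : 0 < t := div_pos (by linarith) (by linarith)
  set α : ℝ := (t+1)/2 with hαdef
  have hα1 : α < 1 := by rw [hαdef]; linarith
  have hα0 : 0 < α := by rw [hαdef]; linarith
  have hαt : t < α := by rw [hαdef]; linarith
  have h2tr : 2*t*r = 1 - r := by
    rw [htdef]; field_simp
  have h2αr : 1 - r < 2*α*r := by nlinarith
  have hαr : α*r < 1 := by nlinarith
  clear_value r t α
  clear hrdef htdef hαdef h2tr hαt ht0 ht1 hρ hr3
  set c : ℕ → ℝ := fun n => match n with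
    | 0 => α
    | (m+1) => -((1-α^2) * α^m) with hcdef
  set a : ℕ → ℂ := fun n => ((c n : ℝ) : ℂ) with hadef
  set f : ℂ → ℂ := fun z => ((α:ℂ) - z)/(1 - (α:ℂ)*z) with hfdef
  have hden : ∀ z : ℂ, ‖z‖ < 1 → (1:ℂ) - (α:ℂ)*z ≠ 0 := by
    intro z hz h
    have h1 : (α:ℂ)*z = 1 := by linear_combination -h
    have := congrArg norm h1
    rw [norm_mul, Complex.norm_real, Real.norm_eq_abs, _root_.abs_of_pos hα0, norm_one] at this
    nlinarith [norm_nonneg z]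
  have hf : ∀ z ∈ ball (0 : ℂ) 1, HasSum (fun n => a n * z ^ n) (f z) := by
    intro z hz
    rw [mem_ball_zero_iff] at hz
    have hαz : ‖(α:ℂ)*z‖ < 1 := by
      rw [norm_mul, Complex.norm_real, Real.norm_eq_abs, _root_.abs_of_pos hα0]
      nlinarith [norm_nonneg z]
    have hne := hden z hz
    rw [← hasSum_nat_add_iff' 1]
    have hgeom := (hasSum_geometric_of_norm_lt_one hαz).mul_left (-(1-(α:ℂ)^2)*z)
    convert hgeom using 1
    · rfl
    · funext n
      show a (n+1) * z^(n+1) = _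
      rw [hadef]
      show ((c (n+1) : ℝ) : ℂ) * z^(n+1) = _
      rw [hcdef]
      push_cast
      ring
    · rw [Finset.sum_range_one]
      show f z - a 0 * z^0 = _
      rw [hadef, hfdef]
      show ((α:ℂ) - z)/(1 - (α:ℂ)*z) - ((c 0 : ℝ) : ℂ) * z^0 = _
      rw [hcdef]
      show ((α:ℂ) - z)/(1 - (α:ℂ)*z) - ((α : ℝ) : ℂ) * z^0 = _
      field_simp
      ring
  have hb : ∀ z ∈ ball (0 : ℂ) 1, ‖f z‖ < 1 := by
    intro z hz
    rw [mem_ball_zero_iff] at hz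
    have hne := hden z hz
    rw [hfdef]
    show ‖((α:ℂ) - z)/(1 - (α:ℂ)*z)‖ < 1
    rw [norm_div, div_lt_one (norm_pos_iff.mpr hne)]
    have hz2 : z.re^2 + z.im^2 < 1 := by
      have h1 : ‖z‖ < 1 := hz
      have h2 : (‖z‖)^2 < 1 := by nlinarith [norm_nonneg z]
      rw [Complex.sq_norm, Complex.normSq_apply] at h2
      nlinarith
    have e1 : ‖(α:ℂ) - z‖ = Real.sqrt ((α - z.re)^2 + z.im^2) := by
      rw [Complex.norm_def, Complex.normSq_apply]
      congr 1
      simp [Complex.sub_re, Complex.sub_im]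
      ring
    have e2 : ‖(1:ℂ) - (α:ℂ)*z‖ = Real.sqrt ((1 - α*z.re)^2 + (α*z.im)^2) := by
      rw [Complex.norm_def, Complex.normSq_apply]
      congr 1
      simp [Complex.sub_re, Complex.sub_im, Complex.mul_re, Complex.mul_im]
      ring
    rw [e1, e2]
    apply Real.sqrt_lt_sqrt (by positivity)
    have hp1 : (0:ℝ) < 1 - α^2 := by nlinarith
    have hp2 : (0:ℝ) < 1 - (z.re^2+z.im^2) := by nlinarith
    nlinarith [mul_pos hp1 hp2]
  refine ⟨f, a, r, hf, hb, hr0.le, hrρ, ?_⟩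
  have hnorm : ∀ n : ℕ, ‖a n‖ = |c n| := by
    intro n
    rw [hadef]
    exact (Complex.norm_real (c n)).trans (Real.norm_eq_abs _)
  have hsum : HasSum (fun n => ‖a n‖ * r^n) (α + ((1-α^2)*r) * (1-α*r)⁻¹) := by
    rw [← hasSum_nat_add_iff' 1]
    have hgeom := (hasSum_geometric_of_lt_one (by positivity) hαr).mul_left ((1-α^2)*r)
    convert hgeom using 1
    · rfl
    · funext n
      rw [show ‖a (n+1)‖ = |c (n+1)| from hnorm (n+1)]
      rw [hcdef]
      show |(-((1-α^2) * α^n))| * r^(n+1) = _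
      rw [abs_neg, _root_.abs_of_nonneg (mul_nonneg (by nlinarith) (pow_nonneg hα0.le n))]
      rw [mul_pow]
      ring
    · rw [Finset.sum_range_one]
      rw [show ‖a 0‖ = |c 0| from hnorm 0]
      show _ - |c 0| * r^0 = _
      rw [hcdef]
      show (α + ((1-α^2)*r) * (1-α*r)⁻¹) - |α| * r^0 = _
      rw [_root_.abs_of_pos hα0]
      ring
  rw [hsum.tsum_eq]
  have h1αr : 0 < 1 - α*r := by linarith
  rw [← sub_pos]
  have key : (α + (1-α^2)*r * (1-α*r)⁻¹) - 1 = ((1+α)*r - (1 - α*r)) * (1-α) * (1-α*r)⁻¹ := by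
    field_simp
    ring
  rw [key]
  apply mul_pos (mul_pos (by nlinarith) (by linarith))
  positivity


/-- Bohr's theorem: if `f = ∑ a_n z^n` is analytic on the unit disk with `|f| < 1`,
then `∑ |a_n| r^n ≤ 1` for every `r ≤ 1/3`; moreover `1/3` is the largest such radius. -/
theorem bohr_theorem :
    (∀ (f : ℂ → ℂ) (a : ℕ → ℂ),
      (∀ z ∈ ball (0 : ℂ) 1, HasSum (fun n => a n * z ^ n) (f z)) →
      (∀ z ∈ ball (0 : ℂ) 1, ‖f z‖ < 1) →
      ∀ r : ℝ, 0 ≤ r → r ≤ 1 / 3 → (∑' n, ‖a n‖ * r ^ n) ≤ 1) ∧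
    (∀ ρ : ℝ, 1 / 3 < ρ →
      ∃ (f : ℂ → ℂ) (a : ℕ → ℂ) (r : ℝ),
        (∀ z ∈ ball (0 : ℂ) 1, HasSum (fun n => a n * z ^ n) (f z)) ∧
        (∀ z ∈ ball (0 : ℂ) 1, ‖f z‖ < 1) ∧
        0 ≤ r ∧ r ≤ ρ ∧ 1 < (∑' n, ‖a n‖ * r ^ n)) :=
  ⟨fun f a hf hb r h0 h13 => part1 f a hf hb r h0 h13, part2⟩
end

section
/- The Taylor coefficients of -J(-z) are all positive; that is, writing -J(-z) = 16 Σ_{n≥0} A_n z^{n+1}, every A_n > 0. -/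
open Metric

/-- The elliptic modular function as an infinite product. -/
noncomputable def modularJ (z : ℂ) : ℂ :=
  16 * z * ∏' n : ℕ, ((1 + z ^ (2 * (n + 1))) / (1 + z ^ (2 * (n + 1) - 1))) ^ 8

namespace MJaux

open Finset Complex Filter

/-- Cauchy convolution of coefficient sequences. -/
def conv (a b : ℕ → ℝ) (n : ℕ) : ℝ := ∑ i ∈ Finset.range (n + 1), a i * b (n - i)

def delta (j : ℕ) : ℝ := if j = 0 then 1 else 0
def gcoef (m j : ℕ) : ℝ := if j = 0 ∨ j = 2 * m + 2 then 1 else 0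
def hcoef (m j : ℕ) : ℝ := if (2 * m + 1) ∣ j then 1 else 0
def fcoef (m : ℕ) : ℕ → ℝ := conv (gcoef m) (hcoef m)
def ecoef (m : ℕ) : ℕ → (ℕ → ℝ)
  | 0 => delta
  | k + 1 => conv (fcoef m) (ecoef m k)
def ccoef : ℕ → (ℕ → ℝ)
  | 0 => delta
  | m + 1 => conv (ccoef m) (ecoef m 8)
def A (n : ℕ) : ℝ := ccoef (n + 1) n

lemma delta_nonneg : ∀ j, 0 ≤ delta j := by intro j; unfold delta; positivity
lemma gcoef_nonneg (m : ℕ) : ∀ j, 0 ≤ gcoef m j := by intro j; unfold gcoef; positivity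
lemma hcoef_nonneg (m : ℕ) : ∀ j, 0 ≤ hcoef m j := by intro j; unfold hcoef; positivity

lemma conv_nonneg {a b : ℕ → ℝ} (ha : ∀ j, 0 ≤ a j) (hb : ∀ j, 0 ≤ b j) :
    ∀ n, 0 ≤ conv a b n := fun n =>
  Finset.sum_nonneg fun i _ => mul_nonneg (ha i) (hb _)

lemma fcoef_nonneg (m : ℕ) : ∀ j, 0 ≤ fcoef m j :=
  conv_nonneg (gcoef_nonneg m) (hcoef_nonneg m)

lemma ecoef_nonneg (m k : ℕ) : ∀ j, 0 ≤ ecoef m k j := by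
  induction k with
  | zero => exact delta_nonneg
  | succ k ih => exact conv_nonneg (fcoef_nonneg m) ih

lemma ccoef_nonneg (m : ℕ) : ∀ j, 0 ≤ ccoef m j := by
  induction m with
  | zero => exact delta_nonneg
  | succ m ih => exact conv_nonneg ih (ecoef_nonneg m 8)

lemma conv_ge_left {a b : ℕ → ℝ} (ha : ∀ j, 0 ≤ a j) (hb : ∀ j, 0 ≤ b j) (n : ℕ) :
    a n * b 0 ≤ conv a b n := by
  have := Finset.single_le_sum (f := fun i => a i * b (n - i))
    (fun i _ => mul_nonneg (ha i) (hb _)) (Finset.self_mem_range_succ n)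
  simpa [conv] using this

lemma conv_ge_right {a b : ℕ → ℝ} (ha : ∀ j, 0 ≤ a j) (hb : ∀ j, 0 ≤ b j) (n : ℕ) :
    a 0 * b n ≤ conv a b n := by
  have := Finset.single_le_sum (f := fun i => a i * b (n - i))
    (fun i _ => mul_nonneg (ha i) (hb _)) (Finset.mem_range.mpr (Nat.succ_pos n))
  simpa [conv] using this

/-- `Low k u` : `u` agrees with `δ₀` up to degree `k`. -/
def Low (k : ℕ) (u : ℕ → ℝ) : Prop := u 0 = 1 ∧ ∀ j, 1 ≤ j → j ≤ k → u j = 0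

lemma low_conv {k : ℕ} {u v : ℕ → ℝ} (hu : Low k u) (hv : Low k v) : Low k (conv u v) := by
  constructor
  · simp [conv, hu.1, hv.1]
  · intro j h1 h2
    apply Finset.sum_eq_zero
    intro i hi
    rcases Nat.eq_zero_or_pos i with h | h
    · subst h
      rw [Nat.sub_zero, hv.2 j h1 h2, mul_zero]
    · rw [hu.2 i h (le_trans (Nat.lt_succ_iff.mp (Finset.mem_range.mp hi)) h2), zero_mul]

lemma low_delta (k : ℕ) : Low k delta :=
  ⟨by simp [delta], fun j h1 _ => by simp [delta]; omega⟩

lemma low_gcoef (m : ℕ) : Low (2 * m) (gcoef m) := by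
  refine ⟨by simp [gcoef], fun j h1 h2 => ?_⟩
  simp only [gcoef, ite_eq_right_iff]
  intro h; exfalso; rcases h with h | h <;> omega

lemma low_hcoef (m : ℕ) : Low (2 * m) (hcoef m) := by
  refine ⟨by simp [hcoef], fun j h1 h2 => ?_⟩
  simp only [hcoef, ite_eq_right_iff]
  intro h; exfalso
  have := Nat.le_of_dvd (by omega) h
  omega

lemma low_fcoef (m : ℕ) : Low (2 * m) (fcoef m) := low_conv (low_gcoef m) (low_hcoef m)

lemma low_ecoef (m k : ℕ) : Low (2 * m) (ecoef m k) := by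
  induction k with
  | zero => exact low_delta _
  | succ k ih => exact low_conv (low_fcoef m) ih

lemma ccoef_succ_eq {m j : ℕ} (hj : j ≤ 2 * m) : ccoef (m + 1) j = ccoef m j := by
  show conv (ccoef m) (ecoef m 8) j = ccoef m j
  rw [conv, Finset.sum_eq_single_of_mem j (Finset.self_mem_range_succ j)]
  · rw [Nat.sub_self, (low_ecoef m 8).1, mul_one]
  · intro i hi hne
    have hi' : i < j + 1 := Finset.mem_range.mp hi
    rw [(low_ecoef m 8).2 (j - i) (by omega) (by omega), mul_zero]

lemma ccoef_stab {m m' j : ℕ} (h : m ≤ m') (hj : j ≤ 2 * m) : ccoef m' j = ccoef m j := by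
  induction m' , h using Nat.le_induction with
  | base => rfl
  | succ m' hm ih => rw [ccoef_succ_eq (le_trans hj (by omega)), ih]

lemma ccoef_eq_A {m n : ℕ} (h : n + 1 ≤ m) : ccoef m n = A n := by
  unfold A
  exact ccoef_stab h (by omega)

lemma ccoef_le_succ (m j : ℕ) : ccoef m j ≤ ccoef (m + 1) j := by
  have := conv_ge_left (ccoef_nonneg m) (ecoef_nonneg m 8) j
  rw [(low_ecoef m 8).1, mul_one] at this
  exact this

lemma ccoef_mono {m m' : ℕ} (h : m ≤ m') (j : ℕ) : ccoef m j ≤ ccoef m' j := by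
  induction m', h using Nat.le_induction with
  | base => exact le_refl _
  | succ m' hm ih => exact le_trans ih (ccoef_le_succ m' j)

lemma ccoef_le_A (m n : ℕ) : ccoef m n ≤ A n := by
  rcases le_or_gt m (n + 1) with h | h
  · exact (ccoef_mono h n).trans (le_of_eq (ccoef_eq_A (le_refl _)))
  · exact le_of_eq (ccoef_eq_A h.le)

lemma one_le_fcoef0 (j : ℕ) : 1 ≤ fcoef 0 j := by
  have := conv_ge_right (gcoef_nonneg 0) (hcoef_nonneg 0) j
  simpa [gcoef, hcoef, fcoef] using this

lemma fcoef0_zero : (1:ℝ) ≤ fcoef 0 0 := one_le_fcoef0 0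

lemma one_le_ecoef0 {k : ℕ} (hk : 1 ≤ k) (j : ℕ) : 1 ≤ ecoef 0 k j := by
  induction k with
  | zero => omega
  | succ k ih =>
    rcases Nat.eq_zero_or_pos k with h | h
    · subst h
      show 1 ≤ conv (fcoef 0) delta j
      have := conv_ge_left (fcoef_nonneg 0) delta_nonneg j
      simp only [delta, if_pos rfl, mul_one, if_true] at this
      norm_num at this
      exact le_trans (one_le_fcoef0 j) this
    · have h1 := conv_ge_right (fcoef_nonneg 0) (ecoef_nonneg 0 k) j
      have h2 := one_le_fcoef0 0
      have h3 := ih h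
      show 1 ≤ conv (fcoef 0) (ecoef 0 k) j
      nlinarith

lemma one_le_A (n : ℕ) : 1 ≤ A n := by
  have h1 : (1:ℝ) ≤ ccoef 1 n := by
    show 1 ≤ conv delta (ecoef 0 8) n
    have := conv_ge_right delta_nonneg (ecoef_nonneg 0 8) n
    simp only [delta, if_pos rfl, one_mul, if_true] at this
    norm_num at this
    exact le_trans (one_le_ecoef0 (by norm_num) n) this
  calc (1:ℝ) ≤ ccoef 1 n := h1
    _ ≤ ccoef (n + 1) n := ccoef_mono (by omega) n
    _ = A n := rfl

lemma A_nonneg (n : ℕ) : 0 ≤ A n := le_trans zero_le_one (one_le_A n)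

/-- `a` represents `F` on the unit disk. -/
def Rep (a : ℕ → ℝ) (F : ℂ → ℂ) : Prop :=
  ∀ z : ℂ, ‖z‖ < 1 → HasSum (fun n => (a n : ℂ) * z ^ n) (F z)

lemma Rep.summable_norm {a : ℕ → ℝ} {F : ℂ → ℂ} (ha : ∀ n, 0 ≤ a n) (h : Rep a F) {z : ℂ}
    (hz : ‖z‖ < 1) : Summable fun n => ‖(a n : ℂ) * z ^ n‖ := by
  have hw : ‖((‖z‖ : ℝ) : ℂ)‖ < 1 := by
    simpa [Complex.norm_real, _root_.abs_of_nonneg (norm_nonneg z)] using hz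
  have h1 := (h _ hw).summable
  have h2 : Summable fun n => a n * ‖z‖ ^ n := by
    rw [← Complex.summable_ofReal]
    refine h1.congr fun n => ?_
    push_cast
    ring
  refine h2.congr fun n => ?_
  rw [norm_mul, norm_pow, Complex.norm_real, Real.norm_of_nonneg (ha n)]

lemma Rep.mul {a b : ℕ → ℝ} {F G : ℂ → ℂ} (ha : ∀ n, 0 ≤ a n) (hb : ∀ n, 0 ≤ b n)
    (hF : Rep a F) (hG : Rep b G) : Rep (conv a b) (fun z => F z * G z) := by
  intro z hz
  have Ha := Rep.summable_norm ha hF hz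
  have Hb := Rep.summable_norm hb hG hz
  have hS := (summable_norm_sum_mul_range_of_summable_norm Ha Hb).of_norm
  have hT := tsum_mul_tsum_eq_tsum_sum_range_of_summable_norm Ha Hb
  rw [(hF z hz).tsum_eq, (hG z hz).tsum_eq] at hT
  have hhs : HasSum
      (fun n => ∑ i ∈ Finset.range (n + 1), ((a i : ℂ) * z ^ i) * ((b (n - i) : ℂ) * z ^ (n - i)))
      (F z * G z) := by
    rw [hT]
    exact hS.hasSum
  have hfun : (fun n => ∑ i ∈ Finset.range (n + 1),
      ((a i : ℂ) * z ^ i) * ((b (n - i) : ℂ) * z ^ (n - i)))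
      = fun n => ((conv a b n : ℝ) : ℂ) * z ^ n := by
    funext n
    rw [conv]
    push_cast
    rw [Finset.sum_mul]
    refine Finset.sum_congr rfl fun i hi => ?_
    have hin : i ≤ n := Nat.lt_succ_iff.mp (Finset.mem_range.mp hi)
    rw [mul_mul_mul_comm, ← pow_add, Nat.add_sub_cancel' hin]
  rwa [hfun] at hhs


lemma rep_delta : Rep delta (fun _ => 1) := by
  intro z _
  have : (fun n => ((delta n : ℝ) : ℂ) * z ^ n) = fun n => if n = 0 then (1 : ℂ) else 0 := by
    funext n
    by_cases h : n = 0 <;> simp [delta, h]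
  rw [this]
  exact hasSum_ite_eq 0 1

lemma rep_gcoef (m : ℕ) : Rep (gcoef m) (fun z => 1 + z ^ (2 * m + 2)) := by
  intro z _
  have h1 : HasSum (fun n => if n = 0 then (1 : ℂ) else 0) 1 := hasSum_ite_eq 0 1
  have h2 : HasSum (fun n => if n = 2 * m + 2 then z ^ (2 * m + 2) else 0) (z ^ (2 * m + 2)) :=
    hasSum_ite_eq _ _
  have h3 := h1.add h2
  have hfun : (fun n => ((gcoef m n : ℝ) : ℂ) * z ^ n)
      = fun n => (if n = 0 then (1 : ℂ) else 0) + (if n = 2 * m + 2 then z ^ (2 * m + 2) else 0) := by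
    funext n
    by_cases h : n = 0
    · subst h; simp [gcoef]
    · by_cases h' : n = 2 * m + 2
      · subst h'; simp [gcoef]
      · simp [gcoef, h, h']
  rw [hfun]
  exact h3

lemma rep_hcoef (m : ℕ) : Rep (hcoef m) (fun z => (1 - z ^ (2 * m + 1))⁻¹) := by
  intro z hz
  have hlt : ‖z ^ (2 * m + 1)‖ < 1 := by
    rw [norm_pow]
    exact pow_lt_one₀ (norm_nonneg z) hz (by omega)
  have hg : HasSum (fun k => (z ^ (2 * m + 1)) ^ k) (1 - z ^ (2 * m + 1))⁻¹ :=
    hasSum_geometric_of_norm_lt_one hlt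
  have hinj : Function.Injective (fun k => (2 * m + 1) * k) := fun x y h => by
    have : (2 * m + 1) * x = (2 * m + 1) * y := h
    exact Nat.eq_of_mul_eq_mul_left (by omega) this
  have hcomp : ((fun n => ((hcoef m n : ℝ) : ℂ) * z ^ n) ∘ (fun k => (2 * m + 1) * k))
      = fun k => (z ^ (2 * m + 1)) ^ k := by
    funext k
    simp only [Function.comp, hcoef]
    rw [if_pos ⟨k, rfl⟩, ← pow_mul]
    push_cast
    ring
  refine (Function.Injective.hasSum_iff hinj ?_).mp (hcomp ▸ hg)
  intro n hn
  have hdvd : ¬ (2 * m + 1) ∣ n := by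
    rintro ⟨k, hk⟩
    exact hn ⟨k, hk.symm⟩
  simp [hcoef, hdvd]


lemma rep_fcoef (m : ℕ) :
    Rep (fcoef m) (fun z => (1 + z ^ (2 * m + 2)) / (1 - z ^ (2 * m + 1))) := by
  have h := Rep.mul (gcoef_nonneg m) (hcoef_nonneg m) (rep_gcoef m) (rep_hcoef m)
  simpa [fcoef, div_eq_mul_inv] using h

lemma rep_ecoef (m k : ℕ) :
    Rep (ecoef m k) (fun z => ((1 + z ^ (2 * m + 2)) / (1 - z ^ (2 * m + 1))) ^ k) := by
  induction k with
  | zero => simpa [ecoef] using rep_delta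
  | succ k ih =>
    have h := Rep.mul (fcoef_nonneg m) (ecoef_nonneg m k) (rep_fcoef m) ih
    have : (fun z : ℂ => ((1 + z ^ (2 * m + 2)) / (1 - z ^ (2 * m + 1)))
        * ((1 + z ^ (2 * m + 2)) / (1 - z ^ (2 * m + 1))) ^ k)
        = fun z => ((1 + z ^ (2 * m + 2)) / (1 - z ^ (2 * m + 1))) ^ (k + 1) := by
      funext z; rw [← pow_succ']
    rw [← this]
    exact h

lemma rep_ccoef (m : ℕ) :
    Rep (ccoef m) (fun z => ∏ k ∈ Finset.range m,
      ((1 + z ^ (2 * k + 2)) / (1 - z ^ (2 * k + 1))) ^ 8) := by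
  induction m with
  | zero => simpa [ccoef] using rep_delta
  | succ m ih =>
    have h := Rep.mul (ccoef_nonneg m) (ecoef_nonneg m 8) ih (rep_ecoef m 8)
    have : (fun z : ℂ => (∏ k ∈ Finset.range m,
        ((1 + z ^ (2 * k + 2)) / (1 - z ^ (2 * k + 1))) ^ 8)
        * ((1 + z ^ (2 * m + 2)) / (1 - z ^ (2 * m + 1))) ^ 8)
        = fun z => ∏ k ∈ Finset.range (m + 1),
        ((1 + z ^ (2 * k + 2)) / (1 - z ^ (2 * k + 1))) ^ 8 := by
      funext z; rw [Finset.prod_range_succ]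
    rw [← this]
    exact h




lemma factor_le_exp {t : ℝ} (ht0 : 0 ≤ t) (ht1 : t < 1) (k : ℕ) :
    (1 + t ^ (2 * k + 2)) / (1 - t ^ (2 * k + 1)) ≤ Real.exp (2 * t ^ k / (1 - t)) := by
  have h1t : 0 < 1 - t := by linarith
  have hs1 : t ^ (2 * k + 1) ≤ t ^ k := pow_le_pow_of_le_one ht0 ht1.le (by omega)
  have hs2 : t ^ (2 * k + 2) ≤ t ^ k := pow_le_pow_of_le_one ht0 ht1.le (by omega)
  have hst : t ^ (2 * k + 1) ≤ t := by
    calc t ^ (2 * k + 1) ≤ t ^ 1 := pow_le_pow_of_le_one ht0 ht1.le (by omega)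
      _ = t := pow_one t
  have hsp : 0 ≤ t ^ (2 * k + 1) := pow_nonneg ht0 _
  have hkp : 0 ≤ t ^ k := pow_nonneg ht0 _
  have hslt : t ^ (2 * k + 1) < 1 := lt_of_le_of_lt hst ht1
  have hden : 0 < 1 - t ^ (2 * k + 1) := by linarith
  set u := t ^ k / (1 - t) with hu
  have hu0 : 0 ≤ u := div_nonneg hkp h1t.le
  have hut : u * (1 - t) = t ^ k := div_mul_cancel₀ _ h1t.ne'
  have key : 1 / (1 - t ^ (2 * k + 1)) ≤ 1 + u := by
    rw [div_le_iff₀ hden]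
    nlinarith [mul_le_mul_of_nonneg_left (show 1 - t ≤ 1 - t ^ (2 * k + 1) by linarith) hu0]
  have step1 : (1 + t ^ (2 * k + 2)) / (1 - t ^ (2 * k + 1)) ≤ (1 + t ^ k) * (1 + u) := by
    rw [div_eq_mul_one_div]
    exact mul_le_mul (by linarith) key (by positivity) (by positivity)
  have e1 : (1 : ℝ) + t ^ k ≤ Real.exp (t ^ k) := by
    have := Real.add_one_le_exp (t ^ k); linarith
  have e2 : (1 : ℝ) + u ≤ Real.exp u := by
    have := Real.add_one_le_exp u; linarith
  calc (1 + t ^ (2 * k + 2)) / (1 - t ^ (2 * k + 1)) ≤ (1 + t ^ k) * (1 + u) := step1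
    _ ≤ Real.exp (t ^ k) * Real.exp u := mul_le_mul e1 e2 (by positivity) (Real.exp_pos _).le
    _ = Real.exp (t ^ k + u) := (Real.exp_add _ _).symm
    _ ≤ Real.exp (2 * t ^ k / (1 - t)) := by
      apply Real.exp_le_exp.mpr
      rw [le_div_iff₀ h1t]
      nlinarith [mul_nonneg hkp ht0]

lemma prod_le_bound {t : ℝ} (ht0 : 0 ≤ t) (ht1 : t < 1) (m : ℕ) :
    ∏ k ∈ Finset.range m, ((1 + t ^ (2 * k + 2)) / (1 - t ^ (2 * k + 1))) ^ 8
      ≤ Real.exp (16 / (1 - t) ^ 2) := by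
  have h1t : 0 < 1 - t := by linarith
  have hfac_nonneg : ∀ k : ℕ, 0 ≤ (1 + t ^ (2 * k + 2)) / (1 - t ^ (2 * k + 1)) := by
    intro k
    have hst : t ^ (2 * k + 1) ≤ t := by
      calc t ^ (2 * k + 1) ≤ t ^ 1 := pow_le_pow_of_le_one ht0 ht1.le (by omega)
        _ = t := pow_one t
    have : 0 < 1 - t ^ (2 * k + 1) := by linarith
    positivity
  have step : ∀ k : ℕ, ((1 + t ^ (2 * k + 2)) / (1 - t ^ (2 * k + 1))) ^ 8
      ≤ Real.exp (16 * t ^ k / (1 - t)) := by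
    intro k
    calc ((1 + t ^ (2 * k + 2)) / (1 - t ^ (2 * k + 1))) ^ 8
        ≤ (Real.exp (2 * t ^ k / (1 - t))) ^ 8 :=
          pow_le_pow_left₀ (hfac_nonneg k) (factor_le_exp ht0 ht1 k) 8
      _ = Real.exp (8 * (2 * t ^ k / (1 - t))) := by
          rw [← Real.exp_nat_mul]; norm_num
      _ = Real.exp (16 * t ^ k / (1 - t)) := by ring_nf
  calc ∏ k ∈ Finset.range m, ((1 + t ^ (2 * k + 2)) / (1 - t ^ (2 * k + 1))) ^ 8
      ≤ ∏ k ∈ Finset.range m, Real.exp (16 * t ^ k / (1 - t)) :=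
        Finset.prod_le_prod (fun k _ => by positivity) (fun k _ => step k)
    _ = Real.exp (∑ k ∈ Finset.range m, 16 * t ^ k / (1 - t)) := (Real.exp_sum _ _).symm
    _ ≤ Real.exp (16 / (1 - t) ^ 2) := by
      apply Real.exp_le_exp.mpr
      have hgeom : ∑ k ∈ Finset.range m, t ^ k ≤ 1 / (1 - t) := by
        have h1 : ∑ k ∈ Finset.range m, t ^ k ≤ ∑' k : ℕ, t ^ k :=
          Summable.sum_le_tsum _ (fun k _ => pow_nonneg ht0 k) (summable_geometric_of_lt_one ht0 ht1)
        rwa [tsum_geometric_of_lt_one ht0 ht1, inv_eq_one_div] at h1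
      have : ∑ k ∈ Finset.range m, 16 * t ^ k / (1 - t)
          = (16 / (1 - t)) * ∑ k ∈ Finset.range m, t ^ k := by
        rw [Finset.mul_sum]; refine Finset.sum_congr rfl fun k _ => by ring
      rw [this]
      calc (16 / (1 - t)) * ∑ k ∈ Finset.range m, t ^ k
          ≤ (16 / (1 - t)) * (1 / (1 - t)) :=
            mul_le_mul_of_nonneg_left hgeom (by positivity)
        _ = 16 / (1 - t) ^ 2 := by field_simp



lemma A_mul_pow_le {t : ℝ} (ht0 : 0 < t) (ht1 : t < 1) (n : ℕ) :
    A n * t ^ n ≤ Real.exp (16 / (1 - t) ^ 2) := by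
  have hz : ‖((t : ℝ) : ℂ)‖ < 1 := by
    rw [Complex.norm_real, Real.norm_of_nonneg ht0.le]
    exact ht1
  have hrep := rep_ccoef (n + 1) ((t : ℝ) : ℂ) hz
  have hval : (∏ k ∈ Finset.range (n + 1),
      ((1 + ((t : ℝ) : ℂ) ^ (2 * k + 2)) / (1 - ((t : ℝ) : ℂ) ^ (2 * k + 1))) ^ 8)
      = (((∏ k ∈ Finset.range (n + 1),
      ((1 + t ^ (2 * k + 2)) / (1 - t ^ (2 * k + 1))) ^ 8 : ℝ)) : ℂ) := by
    push_cast
    rfl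
  have hfun : (fun j => ((ccoef (n + 1) j : ℝ) : ℂ) * ((t : ℝ) : ℂ) ^ j)
      = fun j => ((ccoef (n + 1) j * t ^ j : ℝ) : ℂ) := by
    funext j; push_cast; ring
  have hrep2 : HasSum (fun j => ((ccoef (n + 1) j * t ^ j : ℝ) : ℂ))
      (((∏ k ∈ Finset.range (n + 1),
      ((1 + t ^ (2 * k + 2)) / (1 - t ^ (2 * k + 1))) ^ 8 : ℝ)) : ℂ) := by
    rw [← hfun, ← hval]
    exact hrep
  have hre : HasSum (fun j => ccoef (n + 1) j * t ^ j)
      (∏ k ∈ Finset.range (n + 1), ((1 + t ^ (2 * k + 2)) / (1 - t ^ (2 * k + 1))) ^ 8) :=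
    Complex.hasSum_ofReal.mp hrep2
  have hterm : A n * t ^ n ≤ ∏ k ∈ Finset.range (n + 1),
      ((1 + t ^ (2 * k + 2)) / (1 - t ^ (2 * k + 1))) ^ 8 := by
    have := le_hasSum hre n (fun j _ =>
      mul_nonneg (ccoef_nonneg (n + 1) j) (pow_nonneg ht0.le j))
    rwa [ccoef_eq_A (le_refl (n + 1))] at this
  exact hterm.trans (prod_le_bound ht0.le ht1 (n + 1))

lemma summable_A_mul_pow {r : ℝ} (hr0 : 0 ≤ r) (hr1 : r < 1) :
    Summable fun n => A n * r ^ n := by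
  obtain ⟨t, ht0, ht1, hrt⟩ : ∃ t : ℝ, 0 < t ∧ t < 1 ∧ r < t :=
    ⟨(1 + r) / 2, by linarith, by linarith, by linarith⟩
  have hq1 : r / t < 1 := (div_lt_one ht0).mpr hrt
  have hq0 : 0 ≤ r / t := div_nonneg hr0 ht0.le
  refine Summable.of_nonneg_of_le
    (fun n => mul_nonneg (A_nonneg n) (pow_nonneg hr0 n)) (fun n => ?_)
    ((summable_geometric_of_lt_one hq0 hq1).mul_left (Real.exp (16 / (1 - t) ^ 2)))
  have hkey : A n * r ^ n = (A n * t ^ n) * (r / t) ^ n := by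
    have htn : t ^ n ≠ 0 := pow_ne_zero n ht0.ne'
    rw [div_pow, mul_assoc, mul_div_assoc', mul_div_cancel_left₀ _ htn]
  rw [hkey]
  exact mul_le_mul_of_nonneg_right (A_mul_pow_le ht0 ht1 n) (pow_nonneg hq0 n)


lemma den_ne {z : ℂ} (hz : ‖z‖ < 1) (n : ℕ) : (1 : ℂ) - z ^ (2 * n + 1) ≠ 0 := by
  intro h
  have h1 : (1 : ℂ) = z ^ (2 * n + 1) := by
    have := sub_eq_zero.mp h
    exact this
  have h2 : ‖z ^ (2 * n + 1)‖ < 1 := by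
    rw [norm_pow]; exact pow_lt_one₀ (norm_nonneg z) hz (by omega)
  rw [← h1] at h2
  simp at h2

lemma num_ne {z : ℂ} (hz : ‖z‖ < 1) (n : ℕ) : (1 : ℂ) + z ^ (2 * n + 2) ≠ 0 := by
  intro h
  have h1 : z ^ (2 * n + 2) = -1 := by linear_combination h
  have h2 : ‖z ^ (2 * n + 2)‖ < 1 := by
    rw [norm_pow]; exact pow_lt_one₀ (norm_nonneg z) hz (by omega)
  rw [h1] at h2
  simp at h2

lemma multipliable_base {z : ℂ} (hz : ‖z‖ < 1) :
    Multipliable (fun n : ℕ => ((1 + z ^ (2 * n + 2)) / (1 - z ^ (2 * n + 1))) ^ 8) := by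
  set base : ℕ → ℂ := fun n => (1 + z ^ (2 * n + 2)) / (1 - z ^ (2 * n + 1)) with hbase
  set r := ‖z‖ with hr
  have hr0 : 0 ≤ r := norm_nonneg z
  have h1r : 0 < 1 - r := by linarith
  set C : ℝ := 2 / (1 - r) with hC
  have hC0 : 0 ≤ C := by positivity
  -- bound on base n - 1
  have hb1 : ∀ n, ‖base n - 1‖ ≤ C * r ^ n := by
    intro n
    have hden := den_ne hz n
    have heq : base n - 1 = (z ^ (2 * n + 2) + z ^ (2 * n + 1)) / (1 - z ^ (2 * n + 1)) := by
      rw [hbase]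
      field_simp
      ring
    rw [heq, norm_div]
    have hnum : ‖z ^ (2 * n + 2) + z ^ (2 * n + 1)‖ ≤ 2 * r ^ n := by
      have e1 : ‖z ^ (2 * n + 2)‖ ≤ r ^ n := by
        rw [norm_pow]; exact pow_le_pow_of_le_one hr0 hz.le (by omega)
      have e2 : ‖z ^ (2 * n + 1)‖ ≤ r ^ n := by
        rw [norm_pow]; exact pow_le_pow_of_le_one hr0 hz.le (by omega)
      calc ‖z ^ (2 * n + 2) + z ^ (2 * n + 1)‖
          ≤ ‖z ^ (2 * n + 2)‖ + ‖z ^ (2 * n + 1)‖ := norm_add_le _ _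
        _ ≤ 2 * r ^ n := by linarith
    have hdlow : 1 - r ≤ ‖1 - z ^ (2 * n + 1)‖ := by
      have h1 : ‖(1 : ℂ)‖ - ‖z ^ (2 * n + 1)‖ ≤ ‖1 - z ^ (2 * n + 1)‖ :=
        norm_sub_norm_le _ _
      have h2 : ‖z ^ (2 * n + 1)‖ ≤ r := by
        rw [norm_pow]
        calc r ^ (2 * n + 1) ≤ r ^ 1 := pow_le_pow_of_le_one hr0 hz.le (by omega)
          _ = r := pow_one r
      simp only [norm_one] at h1
      linarith
    calc ‖z ^ (2 * n + 2) + z ^ (2 * n + 1)‖ / ‖1 - z ^ (2 * n + 1)‖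
        ≤ (2 * r ^ n) / (1 - r) := by
          apply div_le_div₀ (by positivity) hnum h1r hdlow
      _ = C * r ^ n := by rw [hC]; ring
  have hbb : ∀ n, ‖base n‖ ≤ 1 + C := by
    intro n
    have h1 : ‖base n‖ ≤ ‖base n - 1‖ + 1 := by
      have := norm_add_le (base n - 1) 1
      simpa using this
    have h2 : C * r ^ n ≤ C := by
      calc C * r ^ n ≤ C * 1 := by
            apply mul_le_mul_of_nonneg_left _ hC0
            exact pow_le_one₀ hr0 hz.le
        _ = C := mul_one C
    linarith [hb1 n]
  -- bound on base n ^ 8 - 1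
  set C2 : ℝ := 8 * (1 + C) ^ 7 * C with hC2
  have hw : ∀ n, ‖base n ^ 8 - 1‖ ≤ C2 * r ^ n := by
    intro n
    have hgs : (∑ i ∈ Finset.range 8, base n ^ i) * (base n - 1) = base n ^ 8 - 1 :=
      geom_sum_mul (base n) 8
    rw [← hgs, norm_mul]
    have hsum : ‖∑ i ∈ Finset.range 8, base n ^ i‖ ≤ 8 * (1 + C) ^ 7 := by
      calc ‖∑ i ∈ Finset.range 8, base n ^ i‖
          ≤ ∑ i ∈ Finset.range 8, ‖base n ^ i‖ := norm_sum_le _ _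
        _ ≤ ∑ i ∈ Finset.range 8, (1 + C) ^ 7 := by
            apply Finset.sum_le_sum
            intro i hi
            rw [norm_pow]
            calc ‖base n‖ ^ i ≤ (1 + C) ^ i :=
                  pow_le_pow_left₀ (norm_nonneg _) (hbb n) i
              _ ≤ (1 + C) ^ 7 :=
                  pow_le_pow_right₀ (by linarith) (by
                    have := Finset.mem_range.mp hi; omega)
        _ = 8 * (1 + C) ^ 7 := by
            rw [Finset.sum_const, Finset.card_range]
            push_cast
            ring
    calc ‖∑ i ∈ Finset.range 8, base n ^ i‖ * ‖base n - 1‖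
        ≤ (8 * (1 + C) ^ 7) * (C * r ^ n) := by
          apply mul_le_mul hsum (hb1 n) (norm_nonneg _) (by positivity)
      _ = C2 * r ^ n := by rw [hC2]; ring
  have hWsum : Summable fun n => ‖base n ^ 8 - 1‖ := by
    refine Summable.of_nonneg_of_le (fun n => norm_nonneg _) hw ?_
    exact (summable_geometric_of_lt_one hr0 hz).mul_left C2
  have hlog : Summable fun n => Complex.log (base n ^ 8) := by
    apply Summable.of_norm_bounded_eventually (g := fun n => 3 / 2 * ‖base n ^ 8 - 1‖)
      (hWsum.mul_left _)
    rw [Nat.cofinite_eq_atTop]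
    have hsmall : ∀ᶠ n in Filter.atTop, ‖base n ^ 8 - 1‖ ≤ 1 / 2 :=
      hWsum.tendsto_atTop_zero.eventually (eventually_le_nhds (by norm_num))
    filter_upwards [hsmall] with n hn
    have hb : base n ^ 8 = 1 + (base n ^ 8 - 1) := by ring
    calc ‖Complex.log (base n ^ 8)‖
        = ‖Complex.log (1 + (base n ^ 8 - 1))‖ := by rw [← hb]
      _ ≤ 3 / 2 * ‖base n ^ 8 - 1‖ := Complex.norm_log_one_add_half_le_self hn
  have := Complex.multipliable_of_summable_log hlog
  exact this


set_option maxHeartbeats 1000000 in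
lemma hasSum_A {z : ℂ} (hz : ‖z‖ < 1) :
    HasSum (fun n => (A n : ℂ) * z ^ n)
      (∏' n : ℕ, ((1 + z ^ (2 * n + 2)) / (1 - z ^ (2 * n + 1))) ^ 8) := by
  set r := ‖z‖ with hrdef
  have hr0 : 0 ≤ r := norm_nonneg z
  have hsumr : Summable fun n => A n * r ^ n := summable_A_mul_pow hr0 hz
  have hnorm : ∀ (c : ℝ) (hc : 0 ≤ c) (j : ℕ), ‖(c : ℂ) * z ^ j‖ = c * r ^ j := by
    intro c hc j
    rw [norm_mul, norm_pow, Complex.norm_real, Real.norm_of_nonneg hc]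
  have hsz : Summable fun n => (A n : ℂ) * z ^ n := by
    apply Summable.of_norm
    refine hsumr.congr fun n => ?_
    rw [hnorm (A n) (A_nonneg n) n]
  set T := ∑' n, (A n : ℂ) * z ^ n with hT
  have hTsum : HasSum (fun n => (A n : ℂ) * z ^ n) T := hsz.hasSum
  set P : ℕ → ℂ := fun m => ∏ k ∈ Finset.range m,
    ((1 + z ^ (2 * k + 2)) / (1 - z ^ (2 * k + 1))) ^ 8 with hP
  have hPrep : ∀ m, HasSum (fun j => ((ccoef m j : ℝ) : ℂ) * z ^ j) (P m) :=
    fun m => rep_ccoef m z hz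
  -- partial products tend to T
  have hPtend : Filter.Tendsto P Filter.atTop (nhds T) := by
    rw [tendsto_iff_norm_sub_tendsto_zero]
    set G := ∑' j, A j * r ^ j with hG
    have hGsum : HasSum (fun j => A j * r ^ j) G := hsumr.hasSum
    have hbound : ∀ m, ‖P m - T‖ ≤ G - ∑ j ∈ Finset.range (2 * m + 1), A j * r ^ j := by
      intro m
      set D : ℕ → ℝ := fun j => (A j - ccoef m j) * r ^ j with hD
      have hcle : ∀ j, ccoef m j ≤ A j := fun j => ccoef_le_A m j
      have hD0 : ∀ j, 0 ≤ D j := fun j =>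
        mul_nonneg (by linarith [hcle j]) (pow_nonneg hr0 j)
      have hDle : ∀ j, D j ≤ A j * r ^ j := fun j => by
        apply mul_le_mul_of_nonneg_right _ (pow_nonneg hr0 j)
        linarith [ccoef_nonneg m j]
      have hDsum : Summable D := Summable.of_nonneg_of_le hD0 hDle hsumr
      have hsub : HasSum (fun j => ((ccoef m j : ℝ) : ℂ) * z ^ j - (A j : ℂ) * z ^ j)
          (P m - T) := (hPrep m).sub hTsum
      have hDeq : ∀ j, ‖((ccoef m j : ℝ) : ℂ) * z ^ j - (A j : ℂ) * z ^ j‖ = D j := by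
        intro j
        have : ((ccoef m j : ℝ) : ℂ) * z ^ j - (A j : ℂ) * z ^ j
            = -(((A j - ccoef m j : ℝ) : ℂ) * z ^ j) := by push_cast; ring
        rw [this, norm_neg, hnorm _ (by linarith [hcle j]) j]
      have h1 : ‖P m - T‖ ≤ ∑' j, D j := by
        rw [← hsub.tsum_eq]
        calc ‖∑' j, (((ccoef m j : ℝ) : ℂ) * z ^ j - (A j : ℂ) * z ^ j)‖
            ≤ ∑' j, ‖((ccoef m j : ℝ) : ℂ) * z ^ j - (A j : ℂ) * z ^ j‖ := by
              apply norm_tsum_le_tsum_norm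
              refine hDsum.congr fun j => (hDeq j).symm
          _ = ∑' j, D j := by
              exact tsum_congr hDeq
      have hDzero : ∀ j ∈ Finset.range (2 * m + 1), D j = 0 := by
        intro j hj
        have hj' : j ≤ 2 * m := by have := Finset.mem_range.mp hj; omega
        have : ccoef m j = A j := by
          rcases le_or_gt (j + 1) m with h | h
          · exact ccoef_eq_A h
          · have h1 : ccoef (max m (j + 1)) j = ccoef m j := ccoef_stab (le_max_left _ _) hj'
            have h2 : ccoef (max m (j + 1)) j = A j := ccoef_eq_A (le_max_right _ _)
            rw [← h1, h2]
        rw [hD]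
        simp [this]
      have h2 : ∑' j, D j = ∑' j, D (j + (2 * m + 1)) := by
        rw [← Summable.sum_add_tsum_nat_add (2 * m + 1) hDsum, Finset.sum_eq_zero hDzero, zero_add]
      have h3 : ∑' j, D (j + (2 * m + 1)) ≤ ∑' j, A (j + (2 * m + 1)) * r ^ (j + (2 * m + 1)) := by
        apply Summable.tsum_le_tsum (fun j => hDle _)
        · exact (summable_nat_add_iff (2 * m + 1)).mpr hDsum
        · exact (summable_nat_add_iff (2 * m + 1)).mpr hsumr
      have h4 : ∑' j, A (j + (2 * m + 1)) * r ^ (j + (2 * m + 1))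
          = G - ∑ j ∈ Finset.range (2 * m + 1), A j * r ^ j := by
        have := Summable.sum_add_tsum_nat_add (f := fun j => A j * r ^ j) (2 * m + 1) hsumr
        rw [← hG] at this
        linarith
      calc ‖P m - T‖ ≤ ∑' j, D j := h1
        _ = ∑' j, D (j + (2 * m + 1)) := h2
        _ ≤ ∑' j, A (j + (2 * m + 1)) * r ^ (j + (2 * m + 1)) := h3
        _ = G - ∑ j ∈ Finset.range (2 * m + 1), A j * r ^ j := h4
    have hto : Filter.Tendsto (fun m => G - ∑ j ∈ Finset.range (2 * m + 1), A j * r ^ j)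
        Filter.atTop (nhds 0) := by
      have h1 : Filter.Tendsto (fun N => ∑ j ∈ Finset.range N, A j * r ^ j)
          Filter.atTop (nhds G) := hGsum.tendsto_sum_nat
      have h2 : Filter.Tendsto (fun m : ℕ => 2 * m + 1) Filter.atTop Filter.atTop :=
        Filter.tendsto_atTop_mono (fun m => by simp only [id_eq]; omega) Filter.tendsto_id
      have h3 := (tendsto_const_nhds (x := G)).sub (h1.comp h2)
      simpa using h3
    exact squeeze_zero (fun m => norm_nonneg _) hbound hto
  have hmult := multipliable_base hz
  have hPtend2 : Filter.Tendsto P Filter.atTop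
      (nhds (∏' n : ℕ, ((1 + z ^ (2 * n + 2)) / (1 - z ^ (2 * n + 1))) ^ 8)) :=
    hmult.hasProd.tendsto_prod_nat
  have hTeq : T = ∏' n : ℕ, ((1 + z ^ (2 * n + 2)) / (1 - z ^ (2 * n + 1))) ^ 8 :=
    tendsto_nhds_unique hPtend hPtend2
  rw [← hTeq]
  exact hTsum


lemma neg_modularJ_neg (z : ℂ) :
    -modularJ (-z) = 16 * z * ∏' n : ℕ, ((1 + z ^ (2 * n + 2)) / (1 - z ^ (2 * n + 1))) ^ 8 := by
  have hfac : ∀ n : ℕ, ((1 + (-z) ^ (2 * (n + 1))) / (1 + (-z) ^ (2 * (n + 1) - 1))) ^ 8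
      = ((1 + z ^ (2 * n + 2)) / (1 - z ^ (2 * n + 1))) ^ 8 := by
    intro n
    have h1 : (-z) ^ (2 * (n + 1)) = z ^ (2 * n + 2) := by
      rw [show 2 * (n + 1) = 2 * n + 2 by ring]
      exact Even.neg_pow ⟨n + 1, by ring⟩ z
    have h2 : (-z) ^ (2 * (n + 1) - 1) = -z ^ (2 * n + 1) := by
      rw [show 2 * (n + 1) - 1 = 2 * n + 1 by omega]
      exact Odd.neg_pow ⟨n, by ring⟩ z
    rw [h1, h2, ← sub_eq_add_neg]
  rw [modularJ, tprod_congr hfac]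
  ring

end MJaux

/-- The Taylor coefficients of `-J(-z)` are all positive: there are reals `A_n > 0`
with `-J(-z) = 16 ∑_{n≥0} A_n z^{n+1}` on the unit disk. -/
theorem modularJ_neg_coeffs_pos :
    ∃ A : ℕ → ℝ, (∀ n, 0 < A n) ∧
      ∀ z ∈ ball (0 : ℂ) 1,
        HasSum (fun n => 16 * (A n : ℂ) * z ^ (n + 1)) (-modularJ (-z)) := by
  refine ⟨MJaux.A, fun n => lt_of_lt_of_le one_pos (MJaux.one_le_A n), ?_⟩
  intro z hz
  rw [mem_ball_zero_iff] at hz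
  have h := MJaux.hasSum_A hz
  have h2 := h.mul_left (16 * z)
  have hfun : (fun n => (16 * z) * ((MJaux.A n : ℂ) * z ^ n))
      = fun n => 16 * (MJaux.A n : ℂ) * z ^ (n + 1) := by
    funext n
    ring
  rw [hfun] at h2
  rw [MJaux.neg_modularJ_neg z]
  exact h2
end

section
/- For each 0 < r < 1, the maximum of |J(z)| on the circle |z| = r equals |J(-r)| = -J(-r), i.e. the maximum modulus of the modular function on circles is attained on the negative real axis. -/
open Metric

namespace ModularJAux

/-- log of the `n`-th factor. -/
noncomputable def Lt (z : ℂ) (n : ℕ) : ℂ :=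
  8 * (Complex.log (1 + z ^ (2 * n + 2)) - Complex.log (1 + z ^ (2 * n + 1)))

lemma abs_pow_lt {z : ℂ} (hz : ‖z‖ < 1) {k : ℕ} (hk : k ≠ 0) :
    ‖z ^ k‖ < 1 := by
  rw [norm_pow]
  exact pow_lt_one₀ (norm_nonneg _) hz hk

lemma one_add_ne {z : ℂ} (hz : ‖z‖ < 1) {k : ℕ} (hk : k ≠ 0) :
    1 + z ^ k ≠ 0 := by
  intro h
  have h1 := abs_pow_lt hz hk
  rw [eq_neg_of_add_eq_zero_right h] at h1
  simp at h1

lemma summable_Lt {z : ℂ} (hz : ‖z‖ < 1) : Summable (Lt z) := by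
  set q : ℝ := ‖z‖ with hq
  have hq0 : 0 ≤ q := norm_nonneg _
  have hgeom : Summable (fun n : ℕ => 12 * (q ^ (2 * n + 2) + q ^ (2 * n + 1))) := by
    have h2 : q ^ 2 < 1 := pow_lt_one₀ hq0 hz (by norm_num)
    have hg : Summable (fun n : ℕ => (q ^ 2) ^ n) :=
      summable_geometric_of_lt_one (by positivity) h2
    have : ∀ n : ℕ, 12 * (q ^ (2 * n + 2) + q ^ (2 * n + 1)) =
        (12 * (q ^ 2 + q)) * (q ^ 2) ^ n := by
      intro n
      rw [← pow_mul]
      ring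
    exact ((hg.mul_left _).congr (fun n => (this n).symm))
  apply Summable.of_norm_bounded_eventually_nat hgeom
  have htend : Filter.Tendsto (fun n : ℕ => q ^ n) Filter.atTop (nhds 0) :=
    tendsto_pow_atTop_nhds_zero_of_lt_one hq0 hz
  filter_upwards [htend.eventually_le_const (by norm_num : (0:ℝ) < 1/2)] with n hn
  have hle : ∀ k : ℕ, n ≤ k → ‖z ^ k‖ ≤ 1 / 2 := by
    intro k hk
    rw [norm_pow, ← hq]
    exact le_trans (pow_le_pow_of_le_one hq0 hz.le hk) hn
  have ha : ‖z ^ (2 * n + 2)‖ ≤ 1 / 2 := hle _ (by omega)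
  have hb : ‖z ^ (2 * n + 1)‖ ≤ 1 / 2 := hle _ (by omega)
  have hla : ‖Complex.log (1 + z ^ (2 * n + 2))‖ ≤ (3/2) * ‖z ^ (2 * n + 2)‖ :=
    Complex.norm_log_one_add_half_le_self ha
  have hlb : ‖Complex.log (1 + z ^ (2 * n + 1))‖ ≤ (3/2) * ‖z ^ (2 * n + 1)‖ :=
    Complex.norm_log_one_add_half_le_self hb
  have hna : ‖z ^ (2 * n + 2)‖ = q ^ (2 * n + 2) := by
    rw [norm_pow, hq]
  have hnb : ‖z ^ (2 * n + 1)‖ = q ^ (2 * n + 1) := by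
    rw [norm_pow, hq]
  calc ‖Lt z n‖ = 8 * ‖Complex.log (1 + z ^ (2 * n + 2)) -
        Complex.log (1 + z ^ (2 * n + 1))‖ := by
        rw [Lt, norm_mul]; norm_num
    _ ≤ 8 * (‖Complex.log (1 + z ^ (2 * n + 2))‖ + ‖Complex.log (1 + z ^ (2 * n + 1))‖) := by
        gcongr; exact norm_sub_le _ _
    _ ≤ 8 * ((3/2) * (q ^ (2 * n + 2)) + (3/2) * (q ^ (2 * n + 1))) := by
        rw [← hna, ← hnb]; gcongr
    _ = 12 * (q ^ (2 * n + 2) + q ^ (2 * n + 1)) := by ring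
  
lemma hasProd_factors {z : ℂ} (hz : ‖z‖ < 1) :
    HasProd (fun n : ℕ => ((1 + z ^ (2 * (n + 1))) / (1 + z ^ (2 * (n + 1) - 1))) ^ 8)
      (Complex.exp (∑' n, Lt z n)) := by
  have h := (summable_Lt hz).hasSum.cexp
  have hfun : (fun n : ℕ => ((1 + z ^ (2 * (n + 1))) / (1 + z ^ (2 * (n + 1) - 1))) ^ 8)
      = fun n => Complex.exp (Lt z n) := by
    funext n
    have h1 : 2 * (n + 1) = 2 * n + 2 := by ring
    have h2 : 2 * (n + 1) - 1 = 2 * n + 1 := by omega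
    rw [h2, h1, Lt, show ((8 : ℂ)) = ((8 : ℕ) : ℂ) by norm_num, Complex.exp_nat_mul,
      Complex.exp_sub, Complex.exp_log (one_add_ne hz (by omega)),
      Complex.exp_log (one_add_ne hz (by omega))]
  rw [hfun]
  exact h

lemma modularJ_eq {z : ℂ} (hz : ‖z‖ < 1) :
    modularJ z = 16 * z * Complex.exp (∑' n, Lt z n) := by
  rw [modularJ, (hasProd_factors hz).tprod_eq]

lemma abs_modularJ {z : ℂ} (hz : ‖z‖ < 1) :
    ‖modularJ z‖ = 16 * ‖z‖ * Real.exp ((∑' n, Lt z n).re) := by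
  rw [modularJ_eq hz, norm_mul, norm_mul, Complex.norm_exp]
  norm_num

/-- The real version of `Lt` at `-r`. -/
noncomputable def Ltr (r : ℝ) (n : ℕ) : ℝ :=
  8 * (Real.log (1 + r ^ (2 * n + 2)) - Real.log (1 - r ^ (2 * n + 1)))

lemma Lt_neg {r : ℝ} (hr0 : 0 < r) (hr1 : r < 1) (n : ℕ) :
    Lt (-(r : ℂ)) n = ((Ltr r n : ℝ) : ℂ) := by
  have hpe : (-(r : ℂ)) ^ (2 * n + 2) = ((r ^ (2 * n + 2) : ℝ) : ℂ) := by
    rw [Even.neg_pow ⟨n + 1, by ring⟩]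
    push_cast
    ring
  have hpo : (-(r : ℂ)) ^ (2 * n + 1) = -((r ^ (2 * n + 1) : ℝ) : ℂ) := by
    rw [Odd.neg_pow ⟨n, by ring⟩]
    push_cast
    ring
  have hlt : r ^ (2 * n + 1) < 1 := pow_lt_one₀ hr0.le hr1 (by omega)
  have h1 : (0:ℝ) ≤ 1 + r ^ (2 * n + 2) := by positivity
  have h2 : (0:ℝ) ≤ 1 - r ^ (2 * n + 1) := by linarith
  rw [Lt, hpe, hpo,
    show (1 : ℂ) + ((r ^ (2 * n + 2) : ℝ) : ℂ) = ((1 + r ^ (2 * n + 2) : ℝ) : ℂ) by push_cast; ring,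
    show (1 : ℂ) + -((r ^ (2 * n + 1) : ℝ) : ℂ) = ((1 - r ^ (2 * n + 1) : ℝ) : ℂ) by
      push_cast; ring,
    ← Complex.ofReal_log h1, ← Complex.ofReal_log h2, Ltr]
  push_cast
  ring

lemma re_Lt_le {r : ℝ} (hr0 : 0 < r) (hr1 : r < 1) {z : ℂ} (hz : ‖z‖ = r) (n : ℕ) :
    (Lt z n).re ≤ Ltr r n := by
  have hzlt : ‖z‖ < 1 := by rw [hz]; exact hr1
  have hlt : r ^ (2 * n + 1) < 1 := pow_lt_one₀ hr0.le hr1 (by omega)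
  have habs_a : ‖z ^ (2 * n + 2)‖ = r ^ (2 * n + 2) := by rw [norm_pow, hz]
  have habs_b : ‖z ^ (2 * n + 1)‖ = r ^ (2 * n + 1) := by rw [norm_pow, hz]
  -- upper bound for numerator
  have hA : ‖1 + z ^ (2 * n + 2)‖ ≤ 1 + r ^ (2 * n + 2) := by
    calc ‖1 + z ^ (2 * n + 2)‖
        ≤ ‖1‖ + ‖z ^ (2 * n + 2)‖ := norm_add_le _ _
      _ = 1 + r ^ (2 * n + 2) := by rw [norm_one, habs_a]
  -- lower bound for denominator
  have hB : 1 - r ^ (2 * n + 1) ≤ ‖1 + z ^ (2 * n + 1)‖ := by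
    have h := norm_add_le (1 + z ^ (2 * n + 1)) (-(z ^ (2 * n + 1)))
    rw [add_neg_cancel_right, norm_one, norm_neg, habs_b] at h
    linarith
  have hApos : (0:ℝ) < ‖1 + z ^ (2 * n + 2)‖ :=
    norm_pos_iff.mpr (one_add_ne hzlt (by omega))
  have hBpos : (0:ℝ) < 1 - r ^ (2 * n + 1) := by linarith
  have hre : (Lt z n).re = 8 * (Real.log (‖1 + z ^ (2 * n + 2)‖)
      - Real.log (‖1 + z ^ (2 * n + 1)‖)) := by
    simp [Lt, Complex.log_re, Complex.mul_re, Complex.sub_re, Complex.sub_im]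
  rw [hre, Ltr]
  have h1 : Real.log (‖1 + z ^ (2 * n + 2)‖) ≤ Real.log (1 + r ^ (2 * n + 2)) :=
    Real.log_le_log hApos hA
  have h2 : Real.log (1 - r ^ (2 * n + 1)) ≤ Real.log (‖1 + z ^ (2 * n + 1)‖) :=
    Real.log_le_log hBpos hB
  linarith

end ModularJAux

open ModularJAux in
/-- For `0 < r < 1`, the maximum of `|J|` on the circle `|z| = r` is attained at
`z = -r`, and there `|J(-r)| = -J(-r)` (i.e. `J(-r)` is real and nonpositive). -/
theorem modularJ_max_on_circle (r : ℝ) (hr0 : 0 < r) (hr1 : r < 1) :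
    (∀ z : ℂ, ‖z‖ = r → ‖modularJ z‖ ≤ ‖modularJ (-r)‖) ∧
    ‖modularJ (-r)‖ = -((modularJ (-r)).re) := by
  have hnegr : ((-r : ℝ) : ℂ) = -((r : ℝ) : ℂ) := by push_cast; ring
  have habs_negr : ‖-((r : ℝ) : ℂ)‖ = r := by
    rw [norm_neg, Complex.norm_real, Real.norm_eq_abs, abs_of_pos hr0]
  have hlt_negr : ‖-((r : ℝ) : ℂ)‖ < 1 := by rw [habs_negr]; exact hr1
  -- real summability
  have hsumC : Summable (Lt (-((r : ℝ) : ℂ))) := summable_Lt hlt_negr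
  have hsumR : Summable (Ltr r) := by
    rw [← Complex.summable_ofReal (f := Ltr r)]
    exact hsumC.congr fun n => Lt_neg hr0 hr1 n
  have htsum : (∑' n, Lt (-((r : ℝ) : ℂ)) n) = ((∑' n, Ltr r n : ℝ) : ℂ) := by
    rw [Complex.ofReal_tsum]
    exact tsum_congr fun n => Lt_neg hr0 hr1 n
  set s : ℝ := ∑' n, Ltr r n with hs
  have hJneg : modularJ (-((r : ℝ) : ℂ)) = ((-16 * r * Real.exp s : ℝ) : ℂ) := by
    rw [modularJ_eq hlt_negr, htsum, ← Complex.ofReal_exp]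
    push_cast
    ring
  constructor
  · intro z hz
    have hzlt : ‖z‖ < 1 := by rw [hz]; exact hr1
    rw [abs_modularJ hzlt, abs_modularJ hlt_negr, habs_negr, hz, htsum]
    have hreS : (∑' n, Lt z n).re = ∑' n, (Lt z n).re :=
      Complex.re_tsum (summable_Lt hzlt)
    have hre_le : (∑' n, Lt z n).re ≤ s := by
      rw [hreS, hs]
      exact Summable.tsum_le_tsum (fun n => re_Lt_le hr0 hr1 hz n)
        (Complex.hasSum_re (summable_Lt hzlt).hasSum).summable hsumR
    have : ((((∑' n, Ltr r n : ℝ)) : ℂ)).re = s := by rw [← hs, Complex.ofReal_re]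
    rw [this]
    have := Real.exp_le_exp.mpr hre_le
    nlinarith [Real.exp_pos (∑' n, Lt z n).re]
  · rw [hJneg]
    rw [Complex.norm_real, Real.norm_eq_abs, Complex.ofReal_re]
    have hexp := Real.exp_pos s
    rw [abs_of_nonpos (by nlinarith)]
end
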